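/- Let F_{q^r} be a finite field of odd characteristic p with q = p^e, let χ(x) = exp(2πi/p · Tr_{F_{q^r}/F_p}(x)), and suppose p ≡ 1 mod 4. Then the sum of χ(y) over all nonzero squares y ∈ F_{q^r}^* equals (-q^{r/2} - 1)/2, and the sum over non-squares equals (q^{r/2} - 1)/2. -/

import Mathlib

open Finset

private lemma aux_const_of_sum {κ : Type*} {t : Finset κ} {f : κ → ℕ} {M : ℕ}
    (hle : ∀ j ∈ t, f j ≤ M) (hsum : ∑ j ∈ t, f j = t.card * M) :
    ∀ j ∈ t, f j = M := by
  intro j hj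
  by_contra hne
  have hlt : f j < M := lt_of_le_of_ne (hle j hj) hne
  have h2 : ∑ i ∈ t, f i < ∑ i ∈ t, M := Finset.sum_lt_sum hle ⟨j, hj, hlt⟩
  rw [Finset.sum_const, smul_eq_mul, hsum] at h2
  exact lt_irrefl _ h2

open Complex in
open Classical in
/-- Eq. (4.5)/(4.6) for `p ≡ 1 (mod 4)`: with `χ(x) = exp(2πi Tr(x)/p)` the
absolute-trace character of `F_{q^r}` (`q = p^e`, `r` even), the sum of `χ` over the
nonzero squares is `(-q^{r/2} - 1)/2` and over the non-squares is `(q^{r/2} - 1)/2`. -/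
theorem char_sum_squares_p1mod4 (p e r : ℕ) (hp : p.Prime) (hpodd : Odd p)
    (he : 0 < e) (hre : Even r) (hr : 0 < r) (hp4 : p % 4 = 1)
    (F : Type*) [Field F] [Fintype F] [Algebra (ZMod p) F]
    (hF : Fintype.card F = p ^ (e * r)) :
    (∑ y : Fˣ, if IsSquare y then
        Complex.exp (2 * Real.pi * Complex.I *
          ((Algebra.trace (ZMod p) F ((y : F))).val : ℂ) / p) else 0) =
      (-((p : ℂ) ^ e) ^ (r / 2) - 1) / 2 ∧
    (∑ y : Fˣ, if ¬ IsSquare y then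
        Complex.exp (2 * Real.pi * Complex.I *
          ((Algebra.trace (ZMod p) F ((y : F))).val : ℂ) / p) else 0) =
      (((p : ℂ) ^ e) ^ (r / 2) - 1) / 2 := by
  classical
  haveI : Fact p.Prime := ⟨hp⟩
  -- arithmetic setup
  set m : ℕ := e * (r / 2) with hm
  set Q : ℕ := p ^ m with hQ
  obtain ⟨kr, hkr⟩ := hre
  have hkr2 : r / 2 = kr := by omega
  have hn : e * r = m + m := by
    rw [hm, hkr2, hkr]; ring
  have hcard : Fintype.card F = Q * Q := by rw [hF, hQ, ← pow_add, ← hn]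
  have hp2 : p ≠ 2 := by intro h; rw [h] at hp4; norm_num at hp4
  have hp5 : 5 ≤ p := by have := hp.two_le; rcases Nat.lt_or_ge p 5 with h | h; · interval_cases p <;> omega
                         · exact h
  have hm1 : 1 ≤ m := by
    have : 1 ≤ r / 2 := by omega
    exact Nat.one_le_iff_ne_zero.mpr (by positivity)
  have hQ5 : 5 ≤ Q := le_trans hp5 (Nat.le_self_pow (by omega) p)
  have hQodd : Odd Q := hpodd.pow
  have hQ4 : Q % 4 = 1 := by rw [hQ, Nat.pow_mod, hp4, one_pow]; norm_num
  -- characteristic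
  have halg_inj : Function.Injective (algebraMap (ZMod p) F) := (algebraMap (ZMod p) F).injective
  haveI hchar : CharP F p := charP_of_injective_algebraMap halg_inj p
  -- frobenius invariance of trace
  have hσc : ∀ c : ZMod p, (frobeniusEquiv F p) (algebraMap (ZMod p) F c) =
      algebraMap (ZMod p) F c := by
    intro c
    rw [frobeniusEquiv_def, ← map_pow, ZMod.pow_card]
  have htrp : ∀ x : F, Algebra.trace (ZMod p) F (x ^ p) = Algebra.trace (ZMod p) F x := by
    intro x
    have h := Algebra.trace_eq_of_algEquiv (AlgEquiv.ofRingEquiv (f := frobeniusEquiv F p) hσc) x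
    simpa [AlgEquiv.ofRingEquiv, frobeniusEquiv_def, frobenius_def] using h
  have htrQ : ∀ x : F, Algebra.trace (ZMod p) F (x ^ Q) = Algebra.trace (ZMod p) F x := by
    have key : ∀ (k : ℕ) (x : F),
        Algebra.trace (ZMod p) F (x ^ p ^ k) = Algebra.trace (ZMod p) F x := by
      intro k
      induction k with
      | zero => intro x; simp
      | succ k ih => intro x; rw [pow_succ, pow_mul, htrp, ih]
    intro x; rw [hQ]; exact key m x
  set T := Algebra.trace (ZMod p) F with hT
  set ψ : AddChar F ℂ :=
    (ZMod.stdAddChar (N := p)).compAddMonoidHom T.toAddMonoidHom with hψdef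
  have hψ : ∀ x : F,
      ψ x = Complex.exp (2 * Real.pi * Complex.I * ((T x).val : ℂ) / p) := by
    intro x
    show ZMod.stdAddChar (T x) = _
    rw [ZMod.stdAddChar_apply, ZMod.toCircle_apply]
  have hψ0 : ψ 0 = 1 := ψ.map_zero_eq_one
  have hψadd : ∀ x y : F, ψ (x + y) = ψ x * ψ y := fun x y => ψ.map_add_eq_mul x y
  have hE1 : ∀ t : ZMod p, ZMod.stdAddChar (N := p) t = 1 → t = 0 := by
    intro t ht
    apply ZMod.injective_stdAddChar (N := p)
    rw [ht, (ZMod.stdAddChar (N := p)).map_zero_eq_one]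
  have hnd2 : ¬ (p ∣ 2) := fun hd => hp2 ((Nat.prime_dvd_prime_iff_eq hp Nat.prime_two).mp hd)
  have h2Z : (2 : ZMod p) ≠ 0 := by
    intro h
    exact hnd2 ((CharP.cast_eq_zero_iff (ZMod p) p 2).mp (by exact_mod_cast h))
  have h2F : (2 : F) ≠ 0 := by
    intro h
    exact hnd2 ((CharP.cast_eq_zero_iff F p 2).mp (by exact_mod_cast h))
  -- the subfield (as a finset)
  set KF : Finset F := univ.filter (fun x : F => x ^ Q = x) with hKF
  have hmemKF : ∀ x : F, x ∈ KF ↔ x ^ Q = x := by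
    intro x; simp [hKF]
  have hfrob : ∀ x y : F, (x + y) ^ Q = x ^ Q + y ^ Q := by
    intro x y; rw [hQ]; exact add_pow_char_pow ..
  have hnegQ : ∀ x : F, (-x) ^ Q = -(x ^ Q) := fun x => hQodd.neg_pow x
  have hxQQ : ∀ x : F, x ^ (Q * Q) = x := by
    intro x
    have := FiniteField.pow_card x
    rwa [hcard] at this
  have h2K : (2 : F) ^ Q = 2 := by
    have : (algebraMap (ZMod p) F 2) ^ Q = algebraMap (ZMod p) F 2 := by
      rw [hQ, ← map_pow, ZMod.pow_card_pow]
    simpa [map_ofNat] using this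
  have h0K : (0 : F) ∈ KF := (hmemKF 0).mpr (zero_pow (by omega : Q ≠ 0))
  -- generator and θ
  obtain ⟨γ, hγ⟩ := IsCyclic.exists_generator (α := Fˣ)
  have hord : orderOf γ = Q * Q - 1 := by
    rw [orderOf_eq_card_of_forall_mem_zpowers hγ, Nat.card_eq_fintype_card, Fintype.card_units, hcard]
  have hQQodd : Odd (Q * Q) := hQodd.mul hQodd
  have hQQ2 : 2 ∣ Q * Q - 1 := by rcases hQQodd with ⟨k, hk⟩; omega
  have hhalf : (γ : F) ^ ((Q * Q - 1) / 2) = -1 := by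
    set δ : Fˣ := γ ^ ((Q * Q - 1) / 2) with hδ
    have hδsq : δ ^ 2 = 1 := by
      rw [hδ, ← pow_mul, Nat.div_mul_cancel hQQ2, ← hord, pow_orderOf_eq_one]
    have hδne : δ ≠ 1 := by
      intro h
      have hdvd : orderOf γ ∣ (Q * Q - 1) / 2 := orderOf_dvd_of_pow_eq_one h
      rw [hord] at hdvd
      have h5 : 25 ≤ Q * Q := Nat.mul_le_mul hQ5 hQ5
      have := Nat.le_of_dvd (by omega) hdvd
      omega
    have hδF : ((δ : F)) ^ 2 = 1 := by
      rw [← Units.val_pow_eq_pow_val, hδsq, Units.val_one]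
    have hfac : ((δ : F) - 1) * ((δ : F) + 1) = 0 := by linear_combination hδF
    rcases mul_eq_zero.mp hfac with h | h
    · exfalso
      apply hδne
      apply Units.ext
      rw [Units.val_one]
      linear_combination h
    · have hv : (δ : F) = -1 := by linear_combination h
      rw [← hv, hδ, Units.val_pow_eq_pow_val]
  have hQ12 : (Q + 1) / 2 * (Q - 1) = (Q * Q - 1) / 2 := by
    obtain ⟨k, hk⟩ := hQodd
    have h1 : (Q + 1) / 2 = k + 1 := by omega
    have h2 : Q * Q = 4 * (k * k) + 4 * k + 1 := by rw [hk]; ring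
    have h3 : (Q * Q - 1) / 2 = 2 * (k * k) + 2 * k := by omega
    have h4 : Q - 1 = 2 * k := by omega
    rw [h1, h3, h4]
    ring
  set θ : F := (γ : F) ^ ((Q + 1) / 2) with hθ
  have hθ0 : θ ≠ 0 := pow_ne_zero _ (Units.ne_zero γ)
  have hθQ : θ ^ Q = -θ := by
    have h1 : θ ^ (Q - 1) = -1 := by
      rw [hθ, ← pow_mul, hQ12, hhalf]
    calc θ ^ Q = θ ^ (Q - 1 + 1) := by congr 1; omega
    _ = θ ^ (Q - 1) * θ := by rw [pow_succ]
    _ = -θ := by rw [h1]; ring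
  -- square root of -1
  have hisq : IsSquare (-1 : F) := by
    rw [FiniteField.isSquare_neg_one_iff, hcard, Nat.mul_mod, hQ4]
    norm_num
  obtain ⟨i, hi⟩ := hisq
  have hi2 : i * i = -1 := hi.symm
  have hi0 : i ≠ 0 := by
    intro h; rw [h, mul_zero] at hi2; exact one_ne_zero (neg_eq_zero.mp hi2.symm)
  have hi4 : i ^ 4 = 1 := by
    have : i ^ 2 = -1 := by rw [sq]; exact hi2
    calc i ^ 4 = (i ^ 2) ^ 2 := by ring
    _ = 1 := by rw [this]; ring
  have hiQ : i ^ Q = i := by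
    obtain ⟨k, hk⟩ : ∃ k, Q = 4 * k + 1 := ⟨Q / 4, by omega⟩
    rw [hk, pow_add, pow_mul, hi4, one_pow, pow_one, one_mul]
  have hθ'0 : i * θ ≠ 0 := mul_ne_zero hi0 hθ0
  have hθ'Q : (i * θ) ^ Q = -(i * θ) := by
    rw [mul_pow, hiQ, hθQ]; ring
  -- the decomposition bijection
  have hdecomp : ∀ (τ : F), τ ≠ 0 → τ ^ Q = -τ → ∀ (f : F → ℂ),
      (∑ ab ∈ KF ×ˢ KF, f (ab.1 + ab.2 * τ)) = ∑ x : F, f x := by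
    intro τ hτ0 hτQ f
    refine Finset.sum_nbij' (i := fun ab => ab.1 + ab.2 * τ)
      (j := fun x => ((x + x ^ Q) / 2, (x - x ^ Q) / (2 * τ))) ?_ ?_ ?_ ?_ ?_
    · intro a _; exact mem_univ _
    · intro x _
      rw [Finset.mem_product, hmemKF, hmemKF]
      constructor
      · rw [div_pow, h2K, hfrob, ← pow_mul, hxQQ, add_comm (x ^ Q) x]
      · rw [div_pow, mul_pow, h2K, hτQ]
        rw [show x - x ^ Q = x + -(x ^ Q) by ring, hfrob, hnegQ, ← pow_mul, hxQQ]
        rw [show x ^ Q + -x = -(x - x ^ Q) by ring]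
        rw [mul_neg, neg_div_neg_eq, sub_eq_add_neg]
    · rintro ⟨a, b⟩ hab
      rw [Finset.mem_product, hmemKF, hmemKF] at hab
      obtain ⟨ha, hb⟩ := hab
      have hkey : (a + b * τ) ^ Q = a - b * τ := by
        rw [hfrob, mul_pow, ha, hb, hτQ]; ring
      have h1 : (a + b * τ + (a + b * τ) ^ Q) / 2 = a := by
        rw [hkey]; field_simp; ring
      have h2 : (a + b * τ - (a + b * τ) ^ Q) / (2 * τ) = b := by
        rw [hkey]; field_simp; ring
      simp only [h1, h2]
    · intro x _
      field_simp
      ring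
    · intro a _; rfl
  -- card of KF
  have hKQ : KF.card = Q := by
    have hle : KF.card ≤ Q := by
      have hsub : KF ⊆ insert (0 : F) (Polynomial.nthRoots (Q - 1) (1 : F)).toFinset := by
        intro x hx
        rw [hmemKF] at hx
        rcases eq_or_ne x 0 with h | h
        · simp [h]
        · refine Finset.mem_insert_of_mem ?_
          rw [Multiset.mem_toFinset, Polynomial.mem_nthRoots (by omega : 0 < Q - 1)]
          have hxx : x ^ (Q - 1) * x = x := by
            rw [← pow_succ]
            have : Q - 1 + 1 = Q := by omega
            rw [this, hx]
          have := mul_right_cancel₀ h (hxx.trans (one_mul x).symm)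
          exact this
      calc KF.card ≤ _ := Finset.card_le_card hsub
      _ ≤ Q := by
          have h0 := Finset.card_insert_le (0 : F) (Polynomial.nthRoots (Q - 1) (1 : F)).toFinset
          have h1 : (Polynomial.nthRoots (Q - 1) (1 : F)).toFinset.card ≤
              Multiset.card (Polynomial.nthRoots (Q - 1) (1 : F)) :=
            Multiset.toFinset_card_le _
          have h2 := Polynomial.card_nthRoots (Q - 1) (1 : F)
          omega
    have hsq : KF.card * KF.card = Q * Q := by
      have h := hdecomp θ hθ0 hθQ (fun _ => (1 : ℂ))
      rw [Finset.sum_const, Finset.sum_const, Finset.card_product, Finset.card_univ, hcard] at h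
      have := h
      rw [nsmul_eq_mul, nsmul_eq_mul, mul_one, mul_one] at this
      exact_mod_cast this
    rcases lt_trichotomy KF.card Q with h | h | h
    · exfalso; have := Nat.mul_lt_mul_of_lt_of_le h (le_of_lt h) (by omega); omega
    · exact h
    · omega
  -- trace is nontrivial on F and on KF
  haveI := Algebra.IsAlgebraic.of_finite (ZMod p) F
  obtain ⟨x₀, hx₀⟩ := Algebra.trace_surjective (ZMod p) F 1
  set c₀ : F := x₀ + x₀ ^ Q with hc₀
  have hc₀K : c₀ ∈ KF := by
    rw [hmemKF, hc₀, hfrob, ← pow_mul, hxQQ, add_comm]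
  have hx₀' : T x₀ = 1 := by rw [hT]; exact hx₀
  have hTc₀ : T c₀ = 2 := by
    rw [hc₀, map_add, htrQ, hx₀']
    norm_num
  have hc₀ψ : ψ c₀ ≠ 1 := by
    intro h1
    apply h2Z
    rw [← hTc₀]
    exact hE1 _ h1
  have hψne1 : ψ ≠ 1 := AddChar.ne_one_iff.mpr ⟨c₀, hc₀ψ⟩
  have hSKzero : (∑ c ∈ KF, ψ c) = 0 := by
    have hshift : ∑ c ∈ KF, ψ (c₀ + c) = ∑ c ∈ KF, ψ c := by
      refine Finset.sum_nbij' (i := fun c => c₀ + c) (j := fun c => c - c₀) ?_ ?_ ?_ ?_ ?_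
      · intro a ha
        rw [hmemKF] at ha
        show c₀ + a ∈ KF
        rw [hmemKF, hfrob, (hmemKF c₀).mp hc₀K, ha]
      · intro a ha
        rw [hmemKF] at ha
        show a - c₀ ∈ KF
        rw [hmemKF, show a - c₀ = a + -c₀ by ring, hfrob, hnegQ, (hmemKF c₀).mp hc₀K, ha]
      · intro a _; show c₀ + a - c₀ = a; ring
      · intro a _; show c₀ + (a - c₀) = a; ring
      · intro a _; rfl
    have hmul : ψ c₀ * ∑ c ∈ KF, ψ c = ∑ c ∈ KF, ψ c := by
      rw [Finset.mul_sum, ← hshift]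
      exact Finset.sum_congr rfl fun c _ => (hψadd c₀ c).symm
    have hfac : (ψ c₀ - 1) * ∑ c ∈ KF, ψ c = 0 := by linear_combination hmul
    rcases mul_eq_zero.mp hfac with h | h
    · exact absurd (by linear_combination h) hc₀ψ
    · exact h
  -- global sums
  set sF : Finset F := univ.erase 0 with hsF
  have hsplit : ∀ f : F → ℂ, ∑ x : F, f x = f 0 + ∑ x ∈ sF, f x := by
    intro f
    rw [hsF, ← Finset.add_sum_erase _ f (mem_univ (0 : F))]
  have hsFcard : sF.card = Q * Q - 1 := by
    rw [hsF, Finset.card_erase_of_mem (mem_univ _), Finset.card_univ, hcard]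
  -- norm fibers
  set Knz : Finset F := KF.erase 0 with hKnz
  have hKnzcard : Knz.card = Q - 1 := by
    rw [hKnz, Finset.card_erase_of_mem h0K, hKQ]
  have hmaps : ∀ x ∈ sF, x ^ (Q + 1) ∈ Knz := by
    intro x hx
    have hx0 : x ≠ 0 := (Finset.mem_erase.mp hx).1
    rw [hKnz, Finset.mem_erase]
    refine ⟨pow_ne_zero _ hx0, ?_⟩
    rw [hmemKF, ← pow_mul]
    have h1 : (Q + 1) * Q = Q * Q + Q := by ring
    rw [h1, pow_add, hxQQ, pow_succ]
    ring
  have hfib := Finset.sum_fiberwise_of_maps_to' hmaps (fun j => ψ j)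
  have hcb : ∀ j ∈ Knz, (sF.filter (fun x => x ^ (Q + 1) = j)).card ≤ Q + 1 := by
    intro j _
    have hsub : sF.filter (fun x => x ^ (Q + 1) = j) ⊆
        (Polynomial.nthRoots (Q + 1) j).toFinset := by
      intro x hx
      rw [Finset.mem_filter] at hx
      rw [Multiset.mem_toFinset, Polynomial.mem_nthRoots (by omega : 0 < Q + 1)]
      exact hx.2
    have h1 := Finset.card_le_card hsub
    have h2 := Multiset.toFinset_card_le (Polynomial.nthRoots (Q + 1) j)
    have h3 := Polynomial.card_nthRoots (Q + 1) j
    omega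
  have hsumcard : ∑ j ∈ Knz, (sF.filter (fun x => x ^ (Q + 1) = j)).card = Knz.card * (Q + 1) := by
    have hA := Finset.sum_card_fiberwise_eq_card_filter sF Knz (fun x => x ^ (Q + 1))
    have hB : Finset.filter (fun i => i ^ (Q + 1) ∈ Knz) sF = sF :=
      Finset.filter_true_of_mem hmaps
    rw [hB] at hA
    rw [hA, hsFcard, hKnzcard]
    have h25 : 25 ≤ Q * Q := Nat.mul_le_mul hQ5 hQ5
    obtain ⟨k, hk⟩ : ∃ k, Q = k + 1 := ⟨Q - 1, by omega⟩
    rw [hk]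
    have h1 : (k + 1) * (k + 1) - 1 = k * (k + 2) := by
      have : (k + 1) * (k + 1) = k * (k + 2) + 1 := by ring
      omega
    rw [h1]
    have h2 : k + 1 - 1 = k := by omega
    rw [h2]
  have hfibcard := aux_const_of_sum hcb hsumcard
  have hS2 : ∑ x : F, ψ (x ^ (Q + 1)) = -(Q : ℂ) := by
    rw [hsplit (fun x => ψ (x ^ (Q + 1)))]
    have h0 : (0 : F) ^ (Q + 1) = 0 := zero_pow (by omega)
    rw [h0, hψ0]
    have hs' : ∑ x ∈ sF, ψ (x ^ (Q + 1)) = (Q + 1 : ℂ) * ∑ j ∈ Knz, ψ j := by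
      rw [← hfib, Finset.mul_sum]
      refine Finset.sum_congr rfl fun j hj => ?_
      rw [Finset.sum_const, hfibcard j hj, nsmul_eq_mul]
      push_cast
      ring
    have hKnzsum : ∑ j ∈ Knz, ψ j = -1 := by
      have h := Finset.add_sum_erase KF (fun c => ψ c) h0K
      rw [hψ0, hSKzero] at h
      rw [hKnz]
      linear_combination h
    rw [hs', hKnzsum]
    push_cast
    ring
  -- the cross-term vanishing
  have hτ0 : ∀ k : F, k ^ Q = k → T (k * θ) = 0 := by
    intro k hk
    have h1 : T ((k * θ) ^ Q) = T (k * θ) := htrQ _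
    rw [mul_pow, hk, hθQ, mul_neg, map_neg] at h1
    have h2 : (2 : ZMod p) * T (k * θ) = 0 := by linear_combination -h1
    rcases mul_eq_zero.mp h2 with h | h
    · exact absurd h h2Z
    · exact h
  have hcross : ∀ a b : F, a ^ Q = a → b ^ Q = b →
      ψ ((a + b * θ) ^ 2) = ψ (a ^ 2 + θ ^ 2 * b ^ 2) := by
    intro a b ha hb
    have hk : (2 * a * b) ^ Q = 2 * a * b := by
      rw [mul_pow, mul_pow, h2K, ha, hb]
    have hdec : (a + b * θ) ^ 2 = (a ^ 2 + θ ^ 2 * b ^ 2) + (2 * a * b) * θ := by ring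
    rw [hdec, hψadd]
    have hone : ψ ((2 * a * b) * θ) = 1 := by
      show ZMod.stdAddChar (T ((2 * a * b) * θ)) = 1
      rw [hτ0 _ hk, (ZMod.stdAddChar (N := p)).map_zero_eq_one]
    rw [hone, mul_one]
  have hnorm : ∀ a b : F, a ^ Q = a → b ^ Q = b →
      (a + b * (i * θ)) ^ (Q + 1) = a ^ 2 + θ ^ 2 * b ^ 2 := by
    intro a b ha hb
    have h1 : (a + b * (i * θ)) ^ Q = a - b * (i * θ) := by
      rw [hfrob, mul_pow, mul_pow, ha, hb, hiQ, hθQ]; ring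
    calc (a + b * (i * θ)) ^ (Q + 1) = (a + b * (i * θ)) ^ Q * (a + b * (i * θ)) := by
          rw [pow_succ]
    _ = (a - b * (i * θ)) * (a + b * (i * θ)) := by rw [h1]
    _ = a ^ 2 + θ ^ 2 * b ^ 2 := by linear_combination (b ^ 2 * θ ^ 2) * hi
  have hS1 : ∑ x : F, ψ (x ^ 2) = ∑ x : F, ψ (x ^ (Q + 1)) := by
    rw [← hdecomp θ hθ0 hθQ (fun x => ψ (x ^ 2)),
      ← hdecomp (i * θ) hθ'0 hθ'Q (fun x => ψ (x ^ (Q + 1)))]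
    refine Finset.sum_congr rfl fun ab hab => ?_
    rw [Finset.mem_product, hmemKF, hmemKF] at hab
    rw [hcross _ _ hab.1 hab.2, hnorm _ _ hab.1 hab.2]
  -- squares fibers
  have hmaps2 : ∀ x ∈ sF, x ^ 2 ∈ sF.filter IsSquare := by
    intro x hx
    have hx0 : x ≠ 0 := (Finset.mem_erase.mp hx).1
    rw [Finset.mem_filter]
    exact ⟨Finset.mem_erase.mpr ⟨pow_ne_zero _ hx0, mem_univ _⟩, ⟨x, sq x⟩⟩
  have hfib2 := Finset.sum_fiberwise_of_maps_to' hmaps2 (fun j => ψ j)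
  have hsq2 : ∀ j ∈ sF.filter IsSquare, (sF.filter (fun x => x ^ 2 = j)).card = 2 := by
    intro j hj
    rw [Finset.mem_filter] at hj
    have hj0 : j ≠ 0 := (Finset.mem_erase.mp hj.1).1
    obtain ⟨c, hc⟩ := hj.2
    have hc0 : c ≠ 0 := by rintro rfl; rw [mul_zero] at hc; exact hj0 hc
    have hset : sF.filter (fun x => x ^ 2 = j) = {c, -c} := by
      ext x
      simp only [Finset.mem_filter, Finset.mem_insert, Finset.mem_singleton, hsF,
        Finset.mem_erase, Finset.mem_univ, and_true]
      constructor
      · rintro ⟨hx0, hx2⟩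
        have hxc : (x - c) * (x + c) = 0 := by
          have h : x ^ 2 = c * c := by rw [hx2, hc]
          linear_combination h
        rcases mul_eq_zero.mp hxc with h | h
        · left; linear_combination h
        · right; linear_combination h
      · rintro (rfl | rfl)
        · exact ⟨hc0, by rw [sq]; exact hc.symm⟩
        · exact ⟨neg_ne_zero.mpr hc0, by rw [hc]; ring⟩
    rw [hset]
    rw [Finset.card_insert_of_notMem, Finset.card_singleton]
    simp only [Finset.mem_singleton]
    intro h
    apply hc0
    have h2 : (2 : F) * c = 0 := by linear_combination h
    rcases mul_eq_zero.mp h2 with h' | h'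
    · exact absurd h' h2F
    · exact h'
  have hA2 : ∑ x ∈ sF, ψ (x ^ 2) = 2 * ∑ j ∈ sF.filter IsSquare, ψ j := by
    rw [← hfib2, Finset.mul_sum]
    refine Finset.sum_congr rfl fun j hj => ?_
    rw [Finset.sum_const, hsq2 j hj, nsmul_eq_mul]
    push_cast
    ring
  -- total nonzero sum
  have hψsumF : ∑ x : F, ψ x = 0 := AddChar.sum_eq_zero_of_ne_one hψne1
  have hsFsum : ∑ x ∈ sF, ψ x = -1 := by
    have h := hsplit (fun x => ψ x)
    rw [hψsumF, hψ0] at h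
    linear_combination -h
  -- value of the square sum
  have hAval : ∑ j ∈ sF.filter IsSquare, ψ j = (-(Q : ℂ) - 1) / 2 := by
    have h1 : ∑ x ∈ sF, ψ (x ^ 2) = -(Q : ℂ) - 1 := by
      have h := hsplit (fun x => ψ (x ^ 2))
      have h0 : (0 : F) ^ 2 = 0 := by ring
      rw [h0, hψ0, hS1, hS2] at h
      linear_combination -h
    rw [h1] at hA2
    field_simp
    linear_combination -hA2
  have hAval' : (∑ x ∈ sF, (if IsSquare x then ψ x else 0)) = (-(Q : ℂ) - 1) / 2 := by
    rw [Finset.sum_filter] at hAval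
    exact hAval
  -- conversion between Fˣ sums and sF sums
  have hsqiff : ∀ y : Fˣ, IsSquare y ↔ IsSquare ((y : F)) := by
    intro y
    constructor
    · rintro ⟨u, rfl⟩
      exact ⟨(u : F), by rw [Units.val_mul]⟩
    · rintro ⟨v, hv⟩
      have hv0 : v ≠ 0 := by
        rintro rfl
        rw [mul_zero] at hv
        exact Units.ne_zero y hv
      exact ⟨Units.mk0 v hv0, Units.ext (by simp [hv])⟩
  have hconvA : (∑ y : Fˣ, if IsSquare ((y : F)) then ψ (y : F) else 0) =
      ∑ x ∈ sF, (if IsSquare x then ψ x else 0) := by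
    refine Finset.sum_bij' (i := fun (y : Fˣ) _ => (y : F))
      (j := fun x hx => Units.mk0 x (Finset.mem_erase.mp hx).1) ?_ ?_ ?_ ?_ ?_
    · intro y _
      exact Finset.mem_erase.mpr ⟨Units.ne_zero y, mem_univ _⟩
    · intro x _; exact mem_univ _
    · intro y _; exact Units.ext rfl
    · intro x _; rfl
    · intro y _; rfl
  have hconvB : (∑ y : Fˣ, if ¬ IsSquare ((y : F)) then ψ (y : F) else 0) =
      ∑ x ∈ sF, (if ¬ IsSquare x then ψ x else 0) := by
    refine Finset.sum_bij' (i := fun (y : Fˣ) _ => (y : F))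
      (j := fun x hx => Units.mk0 x (Finset.mem_erase.mp hx).1) ?_ ?_ ?_ ?_ ?_
    · intro y _
      exact Finset.mem_erase.mpr ⟨Units.ne_zero y, mem_univ _⟩
    · intro x _; exact mem_univ _
    · intro y _; exact Units.ext rfl
    · intro x _; rfl
    · intro y _; rfl
  have hcast : ((p : ℂ) ^ e) ^ (r / 2) = (Q : ℂ) := by
    rw [← pow_mul, hQ, hm]
    push_cast
    ring
  have hApart : (∑ y : Fˣ, if IsSquare y then
      Complex.exp (2 * Real.pi * Complex.I * ((T ((y : F))).val : ℂ) / p) else 0) =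
      (-(Q : ℂ) - 1) / 2 := by
    refine Eq.trans (Finset.sum_congr rfl fun y _ => ?_) (Eq.trans hconvA hAval')
    rw [hψ]
    exact if_congr (hsqiff y) rfl rfl
  have hBpart : (∑ y : Fˣ, if ¬ IsSquare y then
      Complex.exp (2 * Real.pi * Complex.I * ((T ((y : F))).val : ℂ) / p) else 0) =
      ((Q : ℂ) - 1) / 2 := by
    refine Eq.trans (Finset.sum_congr rfl fun y _ => ?_) (Eq.trans hconvB ?_)
    · rw [hψ]
      exact if_congr (not_congr (hsqiff y)) rfl rfl
    · have hsum2 : (∑ x ∈ sF, (if IsSquare x then ψ x else 0)) +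
          (∑ x ∈ sF, (if ¬ IsSquare x then ψ x else 0)) = ∑ x ∈ sF, ψ x := by
        rw [← Finset.sum_add_distrib]
        refine Finset.sum_congr rfl fun x _ => ?_
        by_cases h : IsSquare x <;> simp [h]
      rw [hAval', hsFsum] at hsum2
      have hQ2 : (2 : ℂ) ≠ 0 := two_ne_zero
      field_simp at hsum2 ⊢
      linear_combination hsum2
  constructor
  · rw [hcast]
    convert hApart using 2
  · rw [hcast]
    convert hBpart using 2
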